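/- Proximal Newton descent direction lemma: let f = g + h where g : ℝⁿ → ℝ is twice continuously differentiable and h : ℝⁿ → ℝ is convex. Let H be a symmetric positive definite matrix, let x̂ minimize the model m(x) = g(x₀) + ∇g(x₀)ᵀ(x − x₀) + ½(x − x₀)ᵀH(x − x₀) + h(x), and set Δ = x̂ − x₀. Then for t ∈ (0,1], f(x₀ + tΔ) ≤ f(x₀) − t ΔᵀHΔ + o(t) as t → 0⁺; in particular if Δ ≠ 0 there exists t > 0 with f(x₀ + tΔ) < f(x₀). -/

import Mathlib

open Filter Asymptotics

/-- Proximal Newton descent direction lemma: if x̂ minimizes the quadratic model of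
f = g + h at x₀ built from the gradient of g and a symmetric positive definite H, and
Δ = x̂ − x₀, then for t ∈ (0,1], f(x₀ + tΔ) ≤ f(x₀) − t ΔᵀHΔ + o(t); in particular if
Δ ≠ 0 there is t > 0 with f(x₀ + tΔ) < f(x₀). -/
theorem proximal_newton_descent (n : ℕ)
    (g h : (Fin n → ℝ) → ℝ) (hg : ContDiff ℝ 2 g) (hh : ConvexOn ℝ Set.univ h)
    (H : Matrix (Fin n) (Fin n) ℝ) (hHsymm : H.IsSymm) (hHpd : H.PosDef)
    (x₀ xhat : Fin n → ℝ)
    (hmin : ∀ x, g x₀ + fderiv ℝ g x₀ (xhat - x₀)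
        + (1 / 2) * dotProduct (xhat - x₀) (H.mulVec (xhat - x₀)) + h xhat
      ≤ g x₀ + fderiv ℝ g x₀ (x - x₀)
        + (1 / 2) * dotProduct (x - x₀) (H.mulVec (x - x₀)) + h x) :
    (∃ φ : ℝ → ℝ, φ =o[nhdsWithin 0 (Set.Ioi 0)] (fun t : ℝ => t) ∧
      ∀ t : ℝ, 0 < t → t ≤ 1 →
        g (x₀ + t • (xhat - x₀)) + h (x₀ + t • (xhat - x₀))
          ≤ g x₀ + h x₀ - t * dotProduct (xhat - x₀) (H.mulVec (xhat - x₀)) + φ t)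
    ∧ (xhat - x₀ ≠ 0 → ∃ t : ℝ, 0 < t ∧
        g (x₀ + t • (xhat - x₀)) + h (x₀ + t • (xhat - x₀)) < g x₀ + h x₀) := by
  set Δ : Fin n → ℝ := xhat - x₀ with hΔdef
  set A : ℝ := fderiv ℝ g x₀ Δ with hAdef
  set B : ℝ := dotProduct Δ (H.mulVec Δ) with hBdef
  have hB0 : 0 ≤ B := by
    have := hHpd.posSemidef.dotProduct_mulVec_nonneg Δ
    simpa using this
  -- step inequality for t ∈ (0,1)
  have step : ∀ t : ℝ, 0 < t → t < 1 → A + (h xhat - h x₀) + B ≤ (1 - t) / 2 * B := by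
    intro t ht0 ht1
    have hmin' := hmin (x₀ + t • Δ)
    have hx : x₀ + t • Δ - x₀ = t • Δ := by abel
    have hconv : h (x₀ + t • Δ) ≤ (1 - t) * h x₀ + t * h xhat := by
      have hc := hh.2 (Set.mem_univ x₀) (Set.mem_univ xhat) (by linarith : (0:ℝ) ≤ 1 - t)
        (le_of_lt ht0) (by ring)
      have heq : (1 - t) • x₀ + t • xhat = x₀ + t • Δ := by
        rw [hΔdef]
        ext i
        simp [smul_sub, sub_smul]
        ring
      simpa [heq, smul_eq_mul] using hc
    have hlin : fderiv ℝ g x₀ (x₀ + t • Δ - x₀) = t * A := by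
      rw [hx, map_smul, smul_eq_mul]
    have hquad : dotProduct (x₀ + t • Δ - x₀) (H.mulVec (x₀ + t • Δ - x₀))
        = t ^ 2 * B := by
      rw [hx, Matrix.mulVec_smul, smul_dotProduct, dotProduct_smul,
        smul_eq_mul, smul_eq_mul]
      ring
    rw [hlin, hquad] at hmin'
    have h1t : (0:ℝ) < 1 - t := by linarith
    nlinarith [hmin', hconv, h1t, mul_pos h1t h1t]
  have hkey : A + (h xhat - h x₀) + B ≤ 0 := by
    refine le_of_forall_pos_le_add (fun ε hε => ?_)
    have hB1 : (0:ℝ) < B + 1 := by linarith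
    set s : ℝ := min (1/2 : ℝ) (2 * ε / (B + 1)) with hs
    have hs0 : 0 < s := lt_min (by norm_num) (by positivity)
    have hs1 : s ≤ 1/2 := min_le_left _ _
    have hstep := step (1 - s) (by linarith) (by linarith)
    have h2 : s * (B + 1) ≤ 2 * ε := (le_div_iff₀ hB1).mp (min_le_right _ _)
    have h3 : s * B ≤ 2 * ε := by nlinarith
    have h4 : (1 - (1 - s)) / 2 * B ≤ ε := by
      have : (1 - (1 - s)) / 2 * B = s * B / 2 := by ring
      rw [this]
      linarith
    linarith
  -- derivative of t ↦ g (x₀ + t • Δ) at 0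
  have hgd : HasFDerivAt g (fderiv ℝ g x₀) x₀ :=
    ((hg.differentiable (by norm_num)) x₀).hasFDerivAt
  have hline : HasDerivAt (fun t : ℝ => x₀ + t • Δ) Δ 0 := by
    simpa using ((hasDerivAt_id (0:ℝ)).smul_const Δ).const_add x₀
  have hgd' : HasFDerivAt g (fderiv ℝ g x₀) (x₀ + (0:ℝ) • Δ) := by simpa using hgd
  have hcomp : HasDerivAt (fun t : ℝ => g (x₀ + t • Δ)) A 0 :=
    hgd'.comp_hasDerivAt 0 hline
  have ho : (fun t : ℝ => g (x₀ + t • Δ) - g x₀ - t * A) =o[nhds 0] (fun t : ℝ => t) := by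
    have h5 := hasDerivAt_iff_isLittleO.mp hcomp
    simpa [smul_eq_mul] using h5
  have ho' : (fun t : ℝ => g (x₀ + t • Δ) - g x₀ - t * A)
      =o[nhdsWithin 0 (Set.Ioi 0)] (fun t : ℝ => t) := ho.mono nhdsWithin_le_nhds
  have main : ∀ t : ℝ, 0 < t → t ≤ 1 →
      g (x₀ + t • Δ) + h (x₀ + t • Δ)
        ≤ g x₀ + h x₀ - t * B + (g (x₀ + t • Δ) - g x₀ - t * A) := by
    intro t ht0 ht1
    have hconv : h (x₀ + t • Δ) ≤ (1 - t) * h x₀ + t * h xhat := by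
      have hc := hh.2 (Set.mem_univ x₀) (Set.mem_univ xhat) (by linarith : (0:ℝ) ≤ 1 - t)
        (le_of_lt ht0) (by ring)
      have heq : (1 - t) • x₀ + t • xhat = x₀ + t • Δ := by
        rw [hΔdef]
        ext i
        simp [smul_sub, sub_smul]
        ring
      simpa [heq, smul_eq_mul] using hc
    have hmul : t * (A + (h xhat - h x₀) + B) ≤ 0 :=
      mul_nonpos_of_nonneg_of_nonpos (le_of_lt ht0) hkey
    nlinarith [hconv, hmul]
  constructor
  · exact ⟨fun t => g (x₀ + t • Δ) - g x₀ - t * A, ho', main⟩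
  · intro hΔ
    have hBpos : 0 < B := by
      have := hHpd.dotProduct_mulVec_pos hΔ
      simpa using this
    have hev1 : ∀ᶠ t in nhdsWithin 0 (Set.Ioi 0),
        ‖g (x₀ + t • Δ) - g x₀ - t * A‖ ≤ B / 2 * ‖t‖ :=
      ho'.def (by positivity)
    have hev2 : ∀ᶠ t in nhdsWithin 0 (Set.Ioi 0), t ∈ Set.Ioi (0:ℝ) :=
      self_mem_nhdsWithin
    have hev3 : ∀ᶠ t : ℝ in nhdsWithin (0:ℝ) (Set.Ioi 0), t ≤ 1 := by
      apply Filter.eventually_iff_exists_mem.mpr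
      exact ⟨Set.Iic 1, nhdsWithin_le_nhds (Iic_mem_nhds (by norm_num)), fun t ht => ht⟩
    obtain ⟨t, h1, h2, h3⟩ := (hev1.and (hev2.and hev3)).exists
    have ht0 : 0 < t := h2
    refine ⟨t, ht0, ?_⟩
    have hm := main t ht0 h3
    have habs : g (x₀ + t • Δ) - g x₀ - t * A ≤ B / 2 * t := by
      have := le_trans (le_abs_self _) h1
      rwa [Real.norm_eq_abs, abs_of_pos ht0] at this
    nlinarith [hm, habs, mul_pos ht0 hBpos]
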